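/- If a sequence τ : ℤ → F with all terms nonzero satisfies the Somos-5 recurrence τ(n+5)τ(n) = α̃·τ(n+4)τ(n+1) + β̃·τ(n+3)τ(n+2), then u(n) = τ(n-2)τ(n+1)/(τ(n-1)τ(n)) satisfies u(n+2)·u(n)·u(n+1) = α̃·u(n+1) + β̃ for all n. -/

import Mathlib

/-- A Somos-5 sequence yields a solution of the Somos-5 QRT recurrence. -/
theorem somos5_reduction {F : Type*} [Field F] (α β : F) (τ : ℤ → F)
    (hτ : ∀ n : ℤ, τ n ≠ 0)
    (hrec : ∀ n : ℤ, τ (n + 5) * τ n = α * (τ (n + 4) * τ (n + 1)) + β * (τ (n + 3) * τ (n + 2)))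
    (u : ℤ → F) (hu : ∀ n : ℤ, u n = τ (n - 2) * τ (n + 1) / (τ (n - 1) * τ n)) :
    ∀ n : ℤ, u (n + 2) * u n * u (n + 1) = α * u (n + 1) + β := by
  intro n
  have h := hrec (n - 2)
  have e : ∀ k : ℤ, n - 2 + k = n + (k - 2) := by intro k; ring
  rw [hu, hu, hu]
  have h1 := hτ (n - 2)
  have h2 := hτ (n - 1)
  have h3 := hτ n
  have h4 := hτ (n + 1)
  have h5 := hτ (n + 2)
  have h6 := hτ (n + 3)
  have k1 : n + 2 - 2 = n := by ring
  have k2 : n + 2 - 1 = n + 1 := by ring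
  have k3 : n + 2 + 1 = n + 3 := by ring
  have k4 : n + 1 - 2 = n - 1 := by ring
  have k5 : n + 1 - 1 = n := by ring
  have k6 : n + 1 + 1 = n + 2 := by ring
  have m1 : n - 2 + 5 = n + 3 := by ring
  have m2 : n - 2 + 4 = n + 2 := by ring
  have m3 : n - 2 + 1 = n - 1 := by ring
  have m4 : n - 2 + 3 = n + 1 := by ring
  have m5 : n - 2 + 2 = n := by ring
  rw [k1, k2, k3, k4, k5, k6] at *
  rw [m1, m2, m3, m4, m5] at h
  field_simp
  linear_combination h
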